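/- With the notation of the localization identity, if g ∈ L²(ω) is L²-orthogonal to the space Y = γ₀⁻¹X of A-harmonic functions on ω (with zero boundary values on ∂Ω ∩ ∂ω), then the localized function φ^loc coincides with the global function φ, i.e., the basis function with source g is supported in ω. -/

import Mathlib

/-- if the source `g ∈ L²(ω)` is `L²`-orthogonal to the space
`Y = γ₀⁻¹ X` of `A`-harmonic functions on `ω`, then the localized solution `φ^loc`
coincides with the global solution `φ`, i.e. the basis function with source `g` is
supported in `ω`.  Setup as in the localization identity (Statement 6), with
`Y ⊂ W = L²(ω)` containing all the harmonic parts `E v = γ₀⁻¹γ₀ v`. -/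
theorem statement7
    (V W : Type*)
    [NormedAddCommGroup V] [InnerProductSpace ℝ V]
    [NormedAddCommGroup W] [InnerProductSpace ℝ W]
    (H0 : Submodule ℝ V) (R E : V →ₗ[ℝ] W) (Y : Submodule ℝ W)
    (g : W) (φ φloc : V)
    (hφ : ∀ v : V, (inner ℝ φ v : ℝ) = (inner ℝ g (R v) : ℝ))
    (hmem : φloc ∈ H0)
    (hφloc : ∀ v ∈ H0, (inner ℝ φloc v : ℝ) = (inner ℝ g (R v) : ℝ))
    (hdecomp : ∀ v : V, ∃ v₀ ∈ H0,
      E v = R v - R v₀ ∧ (inner ℝ φloc (v - v₀) : ℝ) = 0)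
    (hEY : ∀ v : V, E v ∈ Y)
    (horth : ∀ y ∈ Y, (inner ℝ g y : ℝ) = 0) :
    φ = φloc := by
  have key : ∀ v : V, (inner ℝ φ v : ℝ) = (inner ℝ φloc v : ℝ) := by
    intro v
    obtain ⟨v₀, hv₀, hE, hperp⟩ := hdecomp v
    have hgE : (inner ℝ g (E v) : ℝ) = 0 := horth _ (hEY v)
    have h1 : (inner ℝ g (R v) : ℝ) = (inner ℝ g (R v₀) : ℝ) := by
      have := hE ▸ hgE
      rw [inner_sub_right] at this
      linarith
    have h2 : (inner ℝ φloc v : ℝ) = (inner ℝ φloc v₀ : ℝ) := by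
      rw [inner_sub_right] at hperp; linarith
    rw [hφ, h1, ← hφloc v₀ hv₀, h2]
  have : (inner ℝ (φ - φloc) (φ - φloc) : ℝ) = 0 := by
    rw [inner_sub_left, key]; ring
  have := inner_self_eq_zero.mp this
  exact sub_eq_zero.mp this
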